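/- Let |q| = 1. In the Fréchet algebra 𝒪_q(𝔹_rⁿ) (completion of 𝒪_q^reg(ℂⁿ) in the norms ‖Σ c_k x^k‖_{B,ρ} = Σ_k |c_k| (k!/|k|!)^{1/2} ρ^{|k|}, 0 < ρ < r), the joint ℓ²-spectral radius of the generating tuple x = (x₁,…,xₙ) equals r. -/

import Mathlib

open Finset Filter

/-- The number of inversions of a word `α : Fin d → Fin n`. -/
def inversions {d n : ℕ} (α : Fin d → Fin n) : ℕ :=
  (Finset.univ.filter (fun p : Fin d × Fin d => p.1 < p.2 ∧ α p.2 < α p.1)).card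

lemma count_cons_aux {d n : ℕ} (j : Fin n) (β : Fin d → Fin n) (i : Fin n) :
    (Finset.univ.filter (fun x : Fin (d+1) => Fin.cons (α := fun _ => Fin n) j β x = i)).card
      = (if j = i then 1 else 0) + (Finset.univ.filter (fun x => β x = i)).card := by
  rw [Finset.card_filter, Finset.card_filter, Fin.sum_univ_succ]
  simp

lemma prod_fact_cons {d n : ℕ} (j : Fin n) (β : Fin d → Fin n) :
    (∏ i : Fin n, Nat.factorial
        ((Finset.univ.filter (fun x : Fin (d+1) => Fin.cons (α := fun _ => Fin n) j β x = i)).card))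
      = ((Finset.univ.filter (fun x => β x = j)).card + 1) *
        ∏ i : Fin n, Nat.factorial ((Finset.univ.filter (fun x => β x = i)).card) := by
  have hmem : j ∈ (Finset.univ : Finset (Fin n)) := Finset.mem_univ j
  rw [← Finset.mul_prod_erase _ _ hmem, ← Finset.mul_prod_erase _ _ hmem, ← mul_assoc]
  have h1 : ∀ i ∈ Finset.univ.erase j,
      Nat.factorial ((Finset.univ.filter
        (fun x : Fin (d+1) => Fin.cons (α := fun _ => Fin n) j β x = i)).card)
      = Nat.factorial ((Finset.univ.filter (fun x => β x = i)).card) := by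
    intro i hi
    rw [count_cons_aux, if_neg (Finset.ne_of_mem_erase hi).symm, Nat.zero_add]
  rw [Finset.prod_congr rfl h1]
  congr 1
  rw [count_cons_aux, if_pos rfl, Nat.add_comm 1, Nat.factorial_succ]

lemma sum_prod_factorial (n d : ℕ) :
    (∑ α : Fin d → Fin n, ∏ i : Fin n,
      Nat.factorial ((Finset.univ.filter (fun j => α j = i)).card)) = n.ascFactorial d := by
  induction d with
  | zero => simp
  | succ d ih =>
    rw [← Equiv.sum_comp (Fin.consEquiv (fun _ => Fin n)), Fintype.sum_prod_type]
    simp only [Fin.consEquiv_apply, prod_fact_cons]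
    rw [Finset.sum_comm, Nat.ascFactorial_succ, ← ih, Finset.mul_sum]
    refine Finset.sum_congr rfl fun β _ => ?_
    rw [← Finset.sum_mul, Finset.sum_add_distrib, Finset.sum_const, Finset.card_univ,
      Fintype.card_fin, smul_eq_mul, mul_one,
      ← Finset.card_eq_sum_card_fiberwise (fun x _ => Finset.mem_univ (β x)),
      Finset.card_univ, Fintype.card_fin, Nat.add_comm]

lemma choose_le_bound {n : ℕ} (hn : 0 < n) {d : ℕ} (hd : n ≤ d) :
    (n + d - 1).choose d ≤ (2 * d) ^ n := by
  have h1 : (n + d - 1) - d = n - 1 := by omega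
  have h2 : (n + d - 1).choose d = (n + d - 1).choose (n - 1) := by
    rw [← h1, Nat.choose_symm (by omega)]
  calc (n + d - 1).choose d = (n + d - 1).choose (n - 1) := h2
    _ ≤ (n + d - 1) ^ (n - 1) := Nat.choose_le_pow _ _
    _ ≤ (2 * d) ^ (n - 1) := Nat.pow_le_pow_left (by omega) _
    _ ≤ (2 * d) ^ n := Nat.pow_le_pow_right (by omega) (by omega)

lemma tendsto_choose_rpow {n : ℕ} (hn : 0 < n) :
    Tendsto (fun d : ℕ => ((n + d - 1).choose d : ℝ) ^ (1 / (2 * (d : ℝ)))) atTop (nhds 1) := by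
  have hu : Tendsto (fun d : ℕ => (2 * (d : ℝ)) ^ ((n : ℝ) / (2 * (d : ℝ)))) atTop (nhds 1) := by
    have h := (tendsto_rpow_div_mul_add (n : ℝ) 1 0 zero_ne_one).comp
      (tendsto_natCast_atTop_atTop.const_mul_atTop two_pos)
    refine h.congr fun d => ?_
    simp [Function.comp]
  refine tendsto_of_tendsto_of_tendsto_of_le_of_le' tendsto_const_nhds hu ?_ ?_
  · filter_upwards [eventually_ge_atTop 1] with d hd
    have hc : 1 ≤ ((n + d - 1).choose d : ℝ) := by
      have : 0 < (n + d - 1).choose d := Nat.choose_pos (by omega)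
      exact_mod_cast this
    exact Real.one_le_rpow hc (by positivity)
  · filter_upwards [eventually_ge_atTop (max n 1)] with d hd
    have hd1 : 1 ≤ d := le_of_max_le_right hd
    have hdn : n ≤ d := le_of_max_le_left hd
    have hb : ((n + d - 1).choose d : ℝ) ≤ ((2 * d : ℕ) : ℝ) ^ (n : ℕ) := by
      exact_mod_cast choose_le_bound hn hdn
    calc ((n + d - 1).choose d : ℝ) ^ (1 / (2 * (d : ℝ)))
        ≤ (((2 * d : ℕ) : ℝ) ^ (n : ℕ)) ^ (1 / (2 * (d : ℝ))) := by
          apply Real.rpow_le_rpow (by positivity) hb (by positivity)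
      _ = (2 * (d : ℝ)) ^ ((n : ℝ) / (2 * (d : ℝ))) := by
          rw [← Real.rpow_natCast (((2 * d : ℕ) : ℝ)) n, ← Real.rpow_mul (by positivity)]
          push_cast
          ring_nf

lemma key_tendsto {n : ℕ} (hn : 0 < n) {q : ℂ} (hq : ‖q‖ = 1) {ρ : ℝ} (hρ : 0 < ρ) :
    Tendsto (fun d : ℕ =>
        (∑ α : Fin d → Fin n,
            (‖q ^ (-(inversions α : ℤ))‖ *
                Real.sqrt
                  ((∏ i : Fin n,
                      (Nat.factorial ((Finset.univ.filter (fun j => α j = i)).card) : ℝ)) /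
                    (Nat.factorial d : ℝ)) *
              ρ ^ d) ^ 2) ^ (1 / (2 * (d : ℝ))))
      atTop (nhds ρ) := by
  have hsum : ∀ d : ℕ,
      (∑ α : Fin d → Fin n,
          (‖q ^ (-(inversions α : ℤ))‖ *
              Real.sqrt
                ((∏ i : Fin n,
                    (Nat.factorial ((Finset.univ.filter (fun j => α j = i)).card) : ℝ)) /
                  (Nat.factorial d : ℝ)) *
            ρ ^ d) ^ 2)
        = ((n + d - 1).choose d : ℝ) * ρ ^ (2 * d) := by
    intro d
    have hd0 : (0 : ℝ) < (Nat.factorial d : ℝ) := by exact_mod_cast d.factorial_pos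
    have habs : ∀ α : Fin d → Fin n, ‖q ^ (-(inversions α : ℤ))‖ = 1 := by
      intro α
      rw [norm_zpow, hq, one_zpow]
    have hterm : ∀ α : Fin d → Fin n,
        (‖q ^ (-(inversions α : ℤ))‖ *
            Real.sqrt
              ((∏ i : Fin n,
                  (Nat.factorial ((Finset.univ.filter (fun j => α j = i)).card) : ℝ)) /
                (Nat.factorial d : ℝ)) *
          ρ ^ d) ^ 2
        = ((∏ i : Fin n,
              (Nat.factorial ((Finset.univ.filter (fun j => α j = i)).card) : ℝ)) /
            (Nat.factorial d : ℝ)) * ρ ^ (2 * d) := by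
      intro α
      rw [habs, one_mul, mul_pow, Real.sq_sqrt (by positivity), pow_mul', ← pow_mul]
    rw [Finset.sum_congr rfl fun α _ => hterm α, ← Finset.sum_mul, ← Finset.sum_div]
    congr 1
    have hcast : (∑ α : Fin d → Fin n, ∏ i : Fin n,
        (Nat.factorial ((Finset.univ.filter (fun j => α j = i)).card) : ℝ))
        = ((n.ascFactorial d : ℕ) : ℝ) := by
      rw [← sum_prod_factorial n d]
      push_cast
      rfl
    rw [hcast, Nat.ascFactorial_eq_factorial_mul_choose']
    push_cast
    rw [mul_comm, mul_div_assoc, div_self (ne_of_gt hd0), mul_one]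
  simp only [hsum]
  have heq : ∀ᶠ d : ℕ in atTop,
      (((n + d - 1).choose d : ℝ) * ρ ^ (2 * d)) ^ (1 / (2 * (d : ℝ)))
        = ((n + d - 1).choose d : ℝ) ^ (1 / (2 * (d : ℝ))) * ρ := by
    filter_upwards [eventually_ge_atTop 1] with d hd
    have hd' : (d : ℝ) ≠ 0 := by exact_mod_cast Nat.one_le_iff_ne_zero.mp hd
    rw [Real.mul_rpow (by positivity) (by positivity)]
    congr 1
    rw [← Real.rpow_natCast ρ (2 * d), ← Real.rpow_mul hρ.le]
    have : ((2 * d : ℕ) : ℝ) * (1 / (2 * (d : ℝ))) = 1 := by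
      push_cast
      field_simp
    rw [this, Real.rpow_one]
  have hlim : Tendsto (fun d : ℕ =>
      ((n + d - 1).choose d : ℝ) ^ (1 / (2 * (d : ℝ))) * ρ) atTop (nhds ρ) := by
    have := (tendsto_choose_rpow hn).mul_const ρ
    rwa [one_mul] at this
  exact Tendsto.congr' (heq.mono fun d h => h.symm) hlim

/-- For `|q| = 1`, the joint ℓ²-spectral radius of the generating tuple `x = (x₁,…,xₙ)` of
`𝒪_q(𝔹_rⁿ)` equals `r`.  Here `‖x_α‖_{B,ρ} = |q^(−m(α))| · (p(α)!/|α|!)^(1/2) · ρ^|α|`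
(since `x_α = q^(−m(α)) x^(p(α))` and `‖x^k‖_{B,ρ} = (k!/|k|!)^(1/2) ρ^|k|` when `|q| = 1`),
and the joint ℓ²-spectral radius is
`sup_{0<ρ<r} lim_{d→∞} (Σ_{α ∈ {1,…,n}^d} ‖x_α‖_{B,ρ}²)^(1/(2d))`. -/
theorem stmt14 {n : ℕ} (hn : 0 < n) (q : ℂ) (hq : ‖q‖ = 1) (r : ℝ) (hr : 0 < r) :
    IsLUB {y : ℝ | ∃ ρ : ℝ, 0 < ρ ∧ ρ < r ∧
        Tendsto (fun d : ℕ =>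
            (∑ α : Fin d → Fin n,
                (‖q ^ (-(inversions α : ℤ))‖ *
                    Real.sqrt
                      ((∏ i : Fin n,
                          (Nat.factorial ((Finset.univ.filter (fun j => α j = i)).card) : ℝ)) /
                        (Nat.factorial d : ℝ)) *
                  ρ ^ d) ^ 2) ^ (1 / (2 * (d : ℝ))))
          atTop (nhds y)}
      r := by
  have hset : {y : ℝ | ∃ ρ : ℝ, 0 < ρ ∧ ρ < r ∧
      Tendsto (fun d : ℕ =>
          (∑ α : Fin d → Fin n,
              (‖q ^ (-(inversions α : ℤ))‖ *
                  Real.sqrt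
                    ((∏ i : Fin n,
                        (Nat.factorial ((Finset.univ.filter (fun j => α j = i)).card) : ℝ)) /
                      (Nat.factorial d : ℝ)) *
                ρ ^ d) ^ 2) ^ (1 / (2 * (d : ℝ))))
        atTop (nhds y)} = Set.Ioo 0 r := by
    ext y
    constructor
    · rintro ⟨ρ, hρ0, hρr, ht⟩
      have : y = ρ := tendsto_nhds_unique ht (key_tendsto hn hq hρ0)
      exact this ▸ ⟨hρ0, hρr⟩
    · rintro ⟨hy0, hyr⟩
      exact ⟨y, hy0, hyr, key_tendsto hn hq hy0⟩
  rw [hset]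
  exact isLUB_Ioo hr
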